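/- arXiv:1703.04508 — 4 statements merged into one kernel-verified Lean document; each statement's English description precedes it below -/
import Mathlib

section
/- Let t ≥ 5 be a natural number and let ν : ℕ → ℤ satisfy ν_j = C(t,j) for 0 ≤ j ≤ 2, ν_{t−1} = ν_t = 0, and the polynomial identity ∑_{j=3}^{t} (C(t,j) − ν_j)·(x−1)^{t−j} = −∑_{j=3}^{t} (−1)^j·(C(t,j) − ν_j)·x^{t−j} in ℤ[x]. Then for every j with 3 ≤ j ≤ t − 2, C(t,j) − ν_j = −∑_{i=3}^{j} (−1)^i · C(t−i, j−i) · (C(t,i) − ν_i). -/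
theorem stmt_4 (t : ℕ) (ht : 5 ≤ t) (ν : ℕ → ℤ)
    (hlow : ∀ j ≤ 2, ν j = (Nat.choose t j : ℤ))
    (h1 : ν (t - 1) = 0) (h2 : ν t = 0)
    (hpoly : ∑ j ∈ Finset.Icc 3 t,
        Polynomial.C ((Nat.choose t j : ℤ) - ν j) * (Polynomial.X - 1) ^ (t - j)
      = -∑ j ∈ Finset.Icc 3 t,
        (-1 : Polynomial ℤ) ^ j * Polynomial.C ((Nat.choose t j : ℤ) - ν j) * Polynomial.X ^ (t - j)) :
    ∀ j, 3 ≤ j → j ≤ t - 2 →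
      (Nat.choose t j : ℤ) - ν j
        = -∑ i ∈ Finset.Icc 3 j,
            (-1 : ℤ) ^ i * (Nat.choose (t - i) (j - i) : ℤ) * ((Nat.choose t i : ℤ) - ν i) := by
  intro j hj3 hjt2
  have hjt : j ≤ t := le_trans hjt2 (Nat.sub_le t 2)
  have hX : (Polynomial.X - 1 : Polynomial ℤ) = Polynomial.X + Polynomial.C (-1) := by
    simp [sub_eq_add_neg]
  have hneg : (-1 : Polynomial ℤ) = Polynomial.C (-1) := by simp
  rw [hX] at hpoly
  have key := congrArg (fun p => Polynomial.coeff p (t - j)) hpoly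
  simp only [hneg, ← Polynomial.C_pow, ← Polynomial.C_mul, Polynomial.finset_sum_coeff,
    Polynomial.coeff_neg, Polynomial.coeff_C_mul, Polynomial.coeff_X_add_C_pow,
    Polynomial.coeff_X_pow, mul_ite, mul_one, mul_zero] at key
  have hRHS : ∑ i ∈ Finset.Icc 3 t,
      (if t - j = t - i then (-1 : ℤ) ^ i * ((Nat.choose t i : ℤ) - ν i) else 0)
      = (-1 : ℤ) ^ j * ((Nat.choose t j : ℤ) - ν j) := by
    have hstep : ∀ i ∈ Finset.Icc 3 t,
        (if t - j = t - i then (-1 : ℤ) ^ i * ((Nat.choose t i : ℤ) - ν i) else 0)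
        = (if i = j then (-1 : ℤ) ^ i * ((Nat.choose t i : ℤ) - ν i) else 0) := by
      intro i hi
      simp only [Finset.mem_Icc] at hi
      by_cases h : i = j
      · subst h; simp
      · rw [if_neg (fun hc => h (by omega)), if_neg h]
    rw [Finset.sum_congr rfl hstep, Finset.sum_ite_eq' (Finset.Icc 3 t) j]
    simp [Finset.mem_Icc, hj3, hjt]
  have hLHS : ∑ i ∈ Finset.Icc 3 t,
      ((Nat.choose t i : ℤ) - ν i) * ((-1 : ℤ) ^ (t - i - (t - j)) * (Nat.choose (t - i) (t - j) : ℤ))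
      = ∑ i ∈ Finset.Icc 3 j,
        (-1 : ℤ) ^ j * ((-1 : ℤ) ^ i * (Nat.choose (t - i) (j - i) : ℤ)
          * ((Nat.choose t i : ℤ) - ν i)) := by
    rw [← Finset.sum_subset (Finset.Icc_subset_Icc_right hjt) (fun i hi hni => ?_)]
    · refine Finset.sum_congr rfl (fun i hi => ?_)
      simp only [Finset.mem_Icc] at hi
      have hij : i ≤ j := hi.2
      have hch : Nat.choose (t - i) (t - j) = Nat.choose (t - i) (j - i) := by
        have hle : t - j ≤ t - i := by omega
        have := Nat.choose_symm hle
        have he : t - i - (t - j) = j - i := by omega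
        rw [← this, he]
      have hexp : t - i - (t - j) = j - i := by omega
      have hsign : (-1 : ℤ) ^ (j - i) = (-1 : ℤ) ^ j * (-1 : ℤ) ^ i := by
        have h1 : (-1 : ℤ) ^ (j - i) = (-1 : ℤ) ^ (j - i) * (-1 : ℤ) ^ (i + i) := by
          rw [Even.neg_one_pow ⟨i, rfl⟩, mul_one]
        rw [h1, ← pow_add, ← pow_add]
        congr 1
        omega
      rw [hch, hexp, hsign]
      ring
    · simp only [Finset.mem_Icc] at hi hni
      have : t - i < t - j := by omega
      rw [Nat.choose_eq_zero_of_lt this]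
      simp
  rw [hLHS, hRHS, ← Finset.mul_sum] at key
  set S := ∑ i ∈ Finset.Icc 3 j,
      (-1 : ℤ) ^ i * (Nat.choose (t - i) (j - i) : ℤ) * ((Nat.choose t i : ℤ) - ν i) with hS
  set d := (Nat.choose t j : ℤ) - ν j with hd
  have he : ((-1 : ℤ) ^ j) * ((-1 : ℤ) ^ j) = 1 := by
    rw [← pow_add]; exact Even.neg_one_pow ⟨j, rfl⟩
  have : S = -d := by
    calc S = ((-1 : ℤ) ^ j * (-1 : ℤ) ^ j) * S := by rw [he, one_mul]
      _ = (-1 : ℤ) ^ j * ((-1 : ℤ) ^ j * S) := by ring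
      _ = (-1 : ℤ) ^ j * (-((-1 : ℤ) ^ j * d)) := by rw [key]
      _ = -(((-1 : ℤ) ^ j * (-1 : ℤ) ^ j) * d) := by ring
      _ = -d := by rw [he, one_mul]
  omega
end

section
/- Let t ≥ 5 be a natural number and let ν : ℕ → ℤ satisfy ν_j = C(t,j) for 0 ≤ j ≤ 2, ν_{t−1} = ν_t = 0, and the polynomial identity ∑_{j=3}^{t} (C(t,j) − ν_j)·(x−1)^{t−j} = −∑_{j=3}^{t} (−1)^j·(C(t,j) − ν_j)·x^{t−j} in ℤ[x]. Then ∑_{j=1}^{t−2} (−1)^j · ν_j = 0. -/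
theorem stmt_5 (t : ℕ) (ht : 5 ≤ t) (ν : ℕ → ℤ)
    (hlow : ∀ j ≤ 2, ν j = (Nat.choose t j : ℤ))
    (h1 : ν (t - 1) = 0) (h2 : ν t = 0)
    (hpoly : ∑ j ∈ Finset.Icc 3 t,
        Polynomial.C ((Nat.choose t j : ℤ) - ν j) * (Polynomial.X - 1) ^ (t - j)
      = -∑ j ∈ Finset.Icc 3 t,
        (-1 : Polynomial ℤ) ^ j * Polynomial.C ((Nat.choose t j : ℤ) - ν j) * Polynomial.X ^ (t - j)) :
    ∑ j ∈ Finset.Icc 1 (t - 2), (-1 : ℤ) ^ j * ν j = 0 := by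
  -- Evaluate the polynomial identity at 1
  have h := congrArg (Polynomial.eval 1) hpoly
  simp only [Polynomial.eval_finset_sum, Polynomial.eval_mul, Polynomial.eval_pow,
    Polynomial.eval_sub, Polynomial.eval_X, Polynomial.eval_one, Polynomial.eval_C,
    Polynomial.eval_neg, sub_self, one_pow, mul_one] at h
  have hL : ∑ j ∈ Finset.Icc 3 t, ((t.choose j : ℤ) - ν j) * (0 : ℤ) ^ (t - j) = 1 := by
    rw [Finset.sum_eq_single t]
    · simp [Nat.choose_self, h2]
    · intro j hj hjt
      rw [Finset.mem_Icc] at hj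
      rw [zero_pow (by omega)]
      ring
    · intro hn
      exact absurd (Finset.mem_Icc.mpr ⟨by omega, le_refl t⟩) hn
  rw [hL] at h
  -- h : 1 = -∑ j ∈ Icc 3 t, (-1)^j * (C t j - ν j)
  have hIcc3 : Finset.Icc 3 t = Finset.Ioc 2 t := (Finset.Icc_add_one_left_eq_Ioc 2 t).symm
  rw [hIcc3] at h
  have hsplit : ∑ j ∈ Finset.Ioc 2 t, (-1 : ℤ) ^ j * ((t.choose j : ℤ) - ν j)
      = ∑ j ∈ Finset.Ioc 2 t, (-1 : ℤ) ^ j * (t.choose j : ℤ)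
        - ∑ j ∈ Finset.Ioc 2 t, (-1 : ℤ) ^ j * ν j := by
    rw [← Finset.sum_sub_distrib]
    exact Finset.sum_congr rfl fun j _ => by ring
  rw [hsplit] at h
  set A := ∑ j ∈ Finset.Ioc 2 t, (-1 : ℤ) ^ j * ν j with hA
  set B := ∑ j ∈ Finset.Ioc 2 t, (-1 : ℤ) ^ j * (t.choose j : ℤ) with hB
  -- alternating sum of binomial coefficients
  have hC0 : ∑ j ∈ Finset.range (t + 1), (-1 : ℤ) ^ j * (t.choose j : ℤ) = 0 := by
    simp [Int.alternating_sum_range_choose, show t ≠ 0 by omega]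
  have hrange : Finset.range (t + 1) = insert 0 (Finset.Ioc 0 t) := by
    ext x; simp only [Finset.mem_range, Finset.mem_insert, Finset.mem_Ioc]; omega
  rw [hrange, Finset.sum_insert (by simp)] at hC0
  norm_num at hC0
  have hsplitC : ∑ j ∈ Finset.Ioc 0 2, (-1 : ℤ) ^ j * (t.choose j : ℤ) + B
      = ∑ j ∈ Finset.Ioc 0 t, (-1 : ℤ) ^ j * (t.choose j : ℤ) :=
    Finset.sum_Ioc_consecutive _ (by omega) (by omega)
  have hIoc02 : Finset.Ioc 0 2 = ({1, 2} : Finset ℕ) := by decide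
  rw [hIoc02] at hsplitC
  have hval12 : ∑ j ∈ ({1, 2} : Finset ℕ), (-1 : ℤ) ^ j * (t.choose j : ℤ)
      = -(t.choose 1 : ℤ) + (t.choose 2 : ℤ) := by
    rw [Finset.sum_insert (by decide), Finset.sum_singleton]; ring
  -- Now handle the goal sum
  have hgoal1 : Finset.Icc 1 (t - 2) = Finset.Ioc 0 (t - 2) := (Finset.Icc_add_one_left_eq_Ioc 0 _).symm
  rw [hgoal1]
  have hsplitν : ∑ j ∈ Finset.Ioc 0 (t - 2), (-1 : ℤ) ^ j * ν j
      + ∑ j ∈ Finset.Ioc (t - 2) t, (-1 : ℤ) ^ j * ν j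
      = ∑ j ∈ Finset.Ioc 0 t, (-1 : ℤ) ^ j * ν j :=
    Finset.sum_Ioc_consecutive _ (by omega) (by omega)
  have htail : ∑ j ∈ Finset.Ioc (t - 2) t, (-1 : ℤ) ^ j * ν j = 0 := by
    have : Finset.Ioc (t - 2) t = ({t - 1, t} : Finset ℕ) := by
      ext x; simp [Finset.mem_Ioc]; omega
    rw [this, Finset.sum_insert (by simp; omega), Finset.sum_singleton, h1, h2]
    ring
  have hsplitν2 : ∑ j ∈ Finset.Ioc 0 2, (-1 : ℤ) ^ j * ν j + A
      = ∑ j ∈ Finset.Ioc 0 t, (-1 : ℤ) ^ j * ν j :=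
    Finset.sum_Ioc_consecutive _ (by omega) (by omega)
  rw [hIoc02] at hsplitν2
  have hvalν12 : ∑ j ∈ ({1, 2} : Finset ℕ), (-1 : ℤ) ^ j * ν j
      = -(t.choose 1 : ℤ) + (t.choose 2 : ℤ) := by
    rw [Finset.sum_insert (by decide), Finset.sum_singleton,
      hlow 1 (by omega), hlow 2 (by omega)]; ring
  rw [hval12] at hsplitC
  rw [hvalν12] at hsplitν2
  linarith [h, hC0, hsplitC, hsplitν, htail, hsplitν2]
end

section
/- For any natural number t ≥ 3 and any odd j with 1 ≤ j ≤ t, the number of vertices T of the hypercube {1,−1}^t that can be written as T = ∑_{Q ∈ S} Q (coordinatewise sum of sign vectors) for some j-element subset S of the vertex set V(R) of a fixed symmetric 2t-cycle R in the hypercube graph H(t,2), with S inclusion-minimal with this property, equals 2·C(t,j). -/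
/-- The standard symmetric 2t-cycle in the hypercube graph H(t,2):
`stdCycleVertex t k` is the k-th vertex (0 ≤ k < 2t). -/
def stdCycleVertex (t : ℕ) (k : ℕ) : Fin t → ℤ :=
  fun i => if k ≤ t then (if i.val < k then -1 else 1) else (if i.val < k - t then 1 else -1)

/-- The vertex set V(R) of the standard symmetric 2t-cycle. -/
def stdCycleVertexSet (t : ℕ) : Finset (Fin t → ℤ) :=
  (Finset.range (2 * t)).image (stdCycleVertex t)

namespace Stmt11Aux
open Finset
section
variable {t : ℕ}


lemma V_le {t k : ℕ} (hk : k ≤ t) (i : Fin t) :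
    stdCycleVertex t k i = if i.val < k then -1 else 1 := by
  simp [stdCycleVertex, hk]

lemma V_pm {t k : ℕ} (i : Fin t) :
    stdCycleVertex t k i = 1 ∨ stdCycleVertex t k i = -1 := by
  unfold stdCycleVertex
  split <;> split <;> simp

lemma V_neg {t : ℕ} {k : ℕ} (hk : k < t) :
    stdCycleVertex t (k + t) = -stdCycleVertex t k := by
  funext i
  rcases Nat.eq_zero_or_pos k with h | h
  · subst h
    simp [stdCycleVertex, i.isLt, i.isLt.le]
  · have h1 : ¬ (k + t ≤ t) := by omega
    simp only [stdCycleVertex, if_neg h1, if_pos hk.le, Nat.add_sub_cancel, Pi.neg_apply]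
    split <;> ring

lemma V_injOn {t : ℕ} (ht : 1 ≤ t) :
    Set.InjOn (stdCycleVertex t) (Finset.range (2 * t)) := by
  have key : ∀ a b : ℕ, a < b → b < 2 * t → stdCycleVertex t a ≠ stdCycleVertex t b := by
    intro a b hab hb2 h
    by_cases hbt : b ≤ t
    · -- a < b ≤ t, coordinate a
      have ha : a < t := by omega
      have := congrFun h ⟨a, ha⟩
      rw [V_le (by omega), V_le hbt] at this
      simp [hab] at this
    · by_cases hat : a ≤ t
      · -- a ≤ t < b
        rcases Nat.eq_zero_or_pos a with h0 | h0
        · subst h0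
          have := congrFun h ⟨t - 1, by omega⟩
          simp only [stdCycleVertex, if_pos (Nat.zero_le t), if_neg hbt] at this
          have hlt : ¬ ((t:ℕ) - 1 < 0) := by omega
          have hlt2 : ¬ ((t:ℕ) - 1 < b - t) := by omega
          simp [hlt, hlt2] at this
        · have := congrFun h ⟨0, by omega⟩
          simp only [stdCycleVertex, if_pos hat, if_neg hbt] at this
          have hlt : (0:ℕ) < a := h0
          have hlt2 : ¬ ((0:ℕ) < b - t) = False := by simp; omega
          simp [hlt, show (0:ℕ) < b - t by omega] at this
      · -- t < a < b, coordinate a - t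
        have := congrFun h ⟨a - t, by omega⟩
        simp only [stdCycleVertex, if_neg hat, if_neg hbt] at this
        simp [show ¬ (a - t < a - t) by omega, show a - t < b - t by omega] at this
  intro a ha b hb h
  simp only [coe_range, Set.mem_Iio] at ha hb
  rcases lt_trichotomy a b with hl | he | hl
  · exact absurd h (key a b hl hb)
  · exact he
  · exact absurd h.symm (key b a hl ha)


lemma sum_coord (ε : ℕ → ℤ) (i : Fin t) :
    (∑ k ∈ Finset.range t, ε k • stdCycleVertex t k) i
      = 2 * (∑ k ∈ Finset.range (i.val + 1), ε k) - ∑ k ∈ Finset.range t, ε k := by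
  rw [Finset.sum_apply]
  have h1 : ∀ k ∈ Finset.range t,
      (ε k • stdCycleVertex t k) i = (if i.val < k then -ε k else ε k) := by
    intro k hk
    rw [Finset.mem_range] at hk
    rw [Pi.smul_apply, V_le hk.le, smul_eq_mul]
    split <;> ring
  rw [Finset.sum_congr rfl h1]
  have hit : i.val + 1 ≤ t := i.isLt
  rw [← Finset.sum_range_add_sum_Ico _ hit, ← Finset.sum_range_add_sum_Ico ε hit]
  have h2 : ∀ k ∈ Finset.range (i.val + 1), (if i.val < k then -ε k else ε k) = ε k := by
    intro k hk; rw [Finset.mem_range] at hk; rw [if_neg (by omega)]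
  have h3 : ∀ k ∈ Finset.Ico (i.val + 1) t, (if i.val < k then -ε k else ε k) = -ε k := by
    intro k hk; rw [Finset.mem_Ico] at hk; rw [if_pos (by omega)]
  rw [Finset.sum_congr rfl h2, Finset.sum_congr rfl h3, Finset.sum_neg_distrib]
  ring

lemma eps_inj (ht : 1 ≤ t) (ε ε' : ℕ → ℤ)
    (h : ∑ k ∈ Finset.range t, ε k • stdCycleVertex t k
       = ∑ k ∈ Finset.range t, ε' k • stdCycleVertex t k) :
    ∀ k < t, ε k = ε' k := by
  have hc : ∀ i : Fin t,
      2 * (∑ k ∈ Finset.range (i.val + 1), ε k) - ∑ k ∈ Finset.range t, ε k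
    = 2 * (∑ k ∈ Finset.range (i.val + 1), ε' k) - ∑ k ∈ Finset.range t, ε' k := by
    intro i; rw [← sum_coord, ← sum_coord, h]
  have htot : ∑ k ∈ Finset.range t, ε k = ∑ k ∈ Finset.range t, ε' k := by
    have := hc ⟨t - 1, by omega⟩
    simp only [show t - 1 + 1 = t by omega] at this
    linarith
  have hB : ∀ m ≤ t, ∑ k ∈ Finset.range m, ε k = ∑ k ∈ Finset.range m, ε' k := by
    intro m hm
    rcases Nat.eq_zero_or_pos m with h0 | h0
    · subst h0; simp
    · have := hc ⟨m - 1, by omega⟩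
      simp only [show m - 1 + 1 = m by omega] at this
      linarith [htot]
  intro k hk
  have h1 := hB (k + 1) (by omega)
  have h2 := hB k (by omega)
  rw [Finset.sum_range_succ, Finset.sum_range_succ] at h1
  linarith
def tau (T : Fin t → ℤ) (k : ℕ) : ℤ := if h : k < t then T ⟨k, h⟩ else 1

lemma tau_eq (T : Fin t → ℤ) (i : Fin t) : tau T i.val = T i := by
  simp [tau, i.isLt]

def eps (T : Fin t → ℤ) (k : ℕ) : ℤ :=
  if k = 0 then (if tau T 0 = tau T (t - 1) then tau T 0 else 0)
  else (if tau T k = tau T (k - 1) then 0 else tau T k)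

variable {T : Fin t → ℤ} (hT : ∀ i, T i = 1 ∨ T i = -1)

lemma htau (hT : ∀ i, T i = 1 ∨ T i = -1) {k : ℕ} (hk : k < t) :
    tau T k = 1 ∨ tau T k = -1 := by
  simp only [tau, dif_pos hk]; exact hT _

lemma pm_add {a b : ℤ} (ha : a = 1 ∨ a = -1) (hb : b = 1 ∨ b = -1) (hne : a ≠ b) :
    a + b = 0 := by rcases ha with h | h <;> rcases hb with h' | h' <;> omega

lemma eps_cases (hT : ∀ i, T i = 1 ∨ T i = -1) {k : ℕ} (hk : k < t) :
    eps T k = 1 ∨ eps T k = -1 ∨ eps T k = 0 := by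
  unfold eps
  split
  · split
    · rcases htau hT (show 0 < t by omega) with h | h <;> simp [h]
    · simp
  · split
    · simp
    · rcases htau hT hk with h | h <;> simp [h]

lemma two_eps (hT : ∀ i, T i = 1 ∨ T i = -1) {k : ℕ} (h1 : 1 ≤ k) (hk : k < t) :
    2 * eps T k = tau T k - tau T (k - 1) := by
  unfold eps
  rw [if_neg (by omega)]
  split
  · omega
  · rename_i hne
    have := pm_add (htau hT hk) (htau hT (show k - 1 < t by omega)) hne
    omega

lemma twoB (hT : ∀ i, T i = 1 ∨ T i = -1) {m : ℕ} (h1 : 1 ≤ m) (hm : m ≤ t) :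
    2 * ∑ k ∈ Finset.range m, eps T k = 2 * eps T 0 + tau T (m - 1) - tau T 0 := by
  have hsplit : ∑ k ∈ Finset.range m, eps T k
      = eps T 0 + ∑ k ∈ Finset.Ico 1 m, eps T k := by
    rw [Finset.range_eq_Ico, Finset.sum_eq_sum_Ico_succ_bot h1]
  have htel : ∑ k ∈ Finset.Ico 1 m, 2 * eps T k = tau T (m - 1) - tau T 0 := by
    have hcong : ∀ k ∈ Finset.Ico 1 m, 2 * eps T k = tau T k - tau T (k - 1) := by
      intro k hk; rw [Finset.mem_Ico] at hk; exact two_eps hT hk.1 (by omega)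
    rw [Finset.sum_congr rfl hcong, Finset.sum_Ico_eq_sum_range]
    have hcong2 : ∀ j ∈ Finset.range (m - 1),
        tau T (1 + j) - tau T (1 + j - 1) = tau T (j + 1) - tau T j := by
      intro j _; congr 2 <;> omega
    rw [Finset.sum_congr rfl hcong2, Finset.sum_range_sub (fun j => tau T j)]
  rw [← Finset.mul_sum] at htel
  rw [hsplit, mul_add]
  linarith

lemma Btot (hT : ∀ i, T i = 1 ∨ T i = -1) (ht : 1 ≤ t) :
    ∑ k ∈ Finset.range t, eps T k = tau T (t - 1) := by
  have h := twoB hT ht le_rfl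
  have h0 : eps T 0 = if tau T 0 = tau T (t - 1) then tau T 0 else 0 := by
    simp [eps]
  by_cases heq : tau T 0 = tau T (t - 1)
  · rw [if_pos heq] at h0; rw [h0, heq] at h; linarith
  · rw [if_neg heq] at h0
    have := pm_add (htau hT (show 0 < t by omega)) (htau hT (show t - 1 < t by omega)) heq
    rw [h0] at h; linarith

lemma eps_zero (T : Fin t → ℤ) :
    eps T 0 = if tau T 0 = tau T (t - 1) then tau T 0 else 0 := by simp [eps]
lemma sum_eps_eq {T : Fin t → ℤ} (hT : ∀ i, T i = 1 ∨ T i = -1) (ht : 1 ≤ t) :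
    ∑ k ∈ Finset.range t, eps T k • stdCycleVertex t k = T := by
  funext i
  rw [sum_coord, Btot hT ht]
  have h2B := twoB hT (show 1 ≤ i.val + 1 by omega) (show i.val + 1 ≤ t by omega)
  simp only [Nat.add_sub_cancel] at h2B
  rw [← tau_eq T i]
  by_cases heq : tau T 0 = tau T (t - 1)
  · have h0 : eps T 0 = tau T 0 := by rw [eps_zero, if_pos heq]
    rw [h0] at h2B; linarith
  · have h0 : eps T 0 = 0 := by rw [eps_zero, if_neg heq]
    have hadd := pm_add (htau hT (show 0 < t by omega)) (htau hT (show t - 1 < t by omega)) heq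
    rw [h0] at h2B; linarith
def epsK (t : ℕ) (K : Finset ℕ) (k : ℕ) : ℤ :=
  (if k ∈ K then 1 else 0) - (if k + t ∈ K then 1 else 0)

lemma filter_lt_eq (K : Finset ℕ) :
    K.filter (fun k => k < t) = (Finset.range t).filter (fun k => k ∈ K) := by
  ext k; simp [Finset.mem_filter, Finset.mem_range]; tauto

lemma filter_ge_eq {K : Finset ℕ} (hK : K ⊆ Finset.range (2 * t)) :
    K.filter (fun k => ¬ k < t)
      = ((Finset.range t).filter (fun m => m + t ∈ K)).image (· + t) := by
  ext k
  simp only [Finset.mem_filter, Finset.mem_image, Finset.mem_range]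
  constructor
  · rintro ⟨hk, hge⟩
    have h2 : k < 2 * t := Finset.mem_range.mp (hK hk)
    refine ⟨k - t, ⟨⟨by omega, ?_⟩, by omega⟩⟩
    rwa [show k - t + t = k by omega]
  · rintro ⟨m, ⟨hm, hmK⟩, hmk⟩
    subst hmk
    exact ⟨hmK, by omega⟩

lemma decomp_sum {K : Finset ℕ} (hK : K ⊆ Finset.range (2 * t)) :
    ∑ k ∈ K, stdCycleVertex t k
      = ∑ k ∈ Finset.range t, epsK t K k • stdCycleVertex t k := by
  have hR : ∀ k ∈ Finset.range t,
      epsK t K k • stdCycleVertex t k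
        = (if k ∈ K then stdCycleVertex t k else 0)
          - (if k + t ∈ K then stdCycleVertex t k else 0) := by
    intro k _
    unfold epsK
    by_cases h1 : k ∈ K <;> by_cases h2 : k + t ∈ K <;> simp [h1, h2]
  rw [Finset.sum_congr rfl hR, Finset.sum_sub_distrib,
    ← Finset.sum_filter, ← Finset.sum_filter]
  rw [← Finset.sum_filter_add_sum_filter_not K (fun k => k < t) (stdCycleVertex t),
    filter_lt_eq, filter_ge_eq hK, Finset.sum_image (by intro a _ b _ h; simp only at h; omega)]
  have : ∀ m ∈ (Finset.range t).filter (fun m => m + t ∈ K),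
      stdCycleVertex t (m + t) = -stdCycleVertex t m := by
    intro m hm
    exact V_neg (Finset.mem_range.mp (Finset.mem_filter.mp hm).1)
  rw [Finset.sum_congr rfl this, Finset.sum_neg_distrib]
  abel

lemma decomp_card {K : Finset ℕ} (hK : K ⊆ Finset.range (2 * t))
    (hfree : ∀ k < t, ¬(k ∈ K ∧ k + t ∈ K)) :
    K.card = ((Finset.range t).filter (fun k => epsK t K k ≠ 0)).card := by
  have hsplit := Finset.card_filter_add_card_filter_not (s := K) (p := fun k => k < t)
  have h1 : (K.filter (fun k => k < t)).card
      = ((Finset.range t).filter (fun k => k ∈ K)).card := by rw [filter_lt_eq]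
  have h2 : (K.filter (fun k => ¬ k < t)).card
      = ((Finset.range t).filter (fun m => m + t ∈ K)).card := by
    rw [filter_ge_eq hK, Finset.card_image_of_injective _ (add_left_injective t)]
  have hunion : (Finset.range t).filter (fun k => epsK t K k ≠ 0)
      = ((Finset.range t).filter (fun k => k ∈ K))
        ∪ ((Finset.range t).filter (fun k => k + t ∈ K)) := by
    ext k
    simp only [Finset.mem_filter, Finset.mem_union, Finset.mem_range]
    constructor
    · rintro ⟨hk, hne⟩
      unfold epsK at hne
      by_cases h1 : k ∈ K <;> by_cases h2 : k + t ∈ K <;> simp [h1, h2] at hne ⊢ <;> tauto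
    · rintro (⟨hk, hmem⟩ | ⟨hk, hmem⟩) <;> refine ⟨by omega, ?_⟩ <;> unfold epsK
      · rw [if_pos hmem, if_neg (fun h2 => hfree k (by omega) ⟨hmem, h2⟩)]; simp
      · rw [if_neg (fun h1 => hfree k (by omega) ⟨h1, hmem⟩), if_pos hmem]; simp
  have hdisj : Disjoint ((Finset.range t).filter (fun k => k ∈ K))
      ((Finset.range t).filter (fun k => k + t ∈ K)) := by
    rw [Finset.disjoint_filter]
    intro k hk h1 h2
    exact hfree k (Finset.mem_range.mp hk) ⟨h1, h2⟩
  rw [hunion, Finset.card_union_of_disjoint hdisj]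
  omega
noncomputable def Kc (T : Fin t → ℤ) : Finset ℕ :=
  ((Finset.range t).filter (fun k => eps T k = 1))
    ∪ (((Finset.range t).filter (fun k => eps T k = -1)).image (· + t))

lemma Kc_subset (T : Fin t → ℤ) : Kc T ⊆ Finset.range (2 * t) := by
  unfold Kc
  apply Finset.union_subset
  · intro k hk
    rw [Finset.mem_filter, Finset.mem_range] at hk
    rw [Finset.mem_range]; omega
  · intro k hk
    rw [Finset.mem_image] at hk
    obtain ⟨m, hm, rfl⟩ := hk
    rw [Finset.mem_filter, Finset.mem_range] at hm
    rw [Finset.mem_range]; omega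

lemma mem_Kc_lt {T : Fin t → ℤ} {k : ℕ} (hk : k < t) :
    k ∈ Kc T ↔ eps T k = 1 := by
  unfold Kc
  rw [Finset.mem_union, Finset.mem_image]
  constructor
  · rintro (h | ⟨m, hm, hmk⟩)
    · exact (Finset.mem_filter.mp h).2
    · rw [Finset.mem_filter, Finset.mem_range] at hm; omega
  · intro h
    exact Or.inl (Finset.mem_filter.mpr ⟨Finset.mem_range.mpr hk, h⟩)

lemma mem_Kc_ge {T : Fin t → ℤ} {k : ℕ} (hk : k < t) :
    k + t ∈ Kc T ↔ eps T k = -1 := by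
  unfold Kc
  rw [Finset.mem_union, Finset.mem_image]
  constructor
  · rintro (h | ⟨m, hm, hmk⟩)
    · rw [Finset.mem_filter, Finset.mem_range] at h; omega
    · rw [Finset.mem_filter] at hm
      have : m = k := by omega
      subst this; exact hm.2
  · intro h
    exact Or.inr ⟨k, Finset.mem_filter.mpr ⟨Finset.mem_range.mpr hk, h⟩, rfl⟩

lemma Kc_free (T : Fin t → ℤ) : ∀ k < t, ¬(k ∈ Kc T ∧ k + t ∈ Kc T) := by
  intro k hk ⟨h1, h2⟩
  rw [mem_Kc_lt hk] at h1
  rw [mem_Kc_ge hk] at h2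
  omega

lemma epsK_Kc {T : Fin t → ℤ} (hT : ∀ i, T i = 1 ∨ T i = -1) :
    ∀ k < t, epsK t (Kc T) k = eps T k := by
  intro k hk
  unfold epsK
  rcases eps_cases hT hk with h | h | h <;>
    simp [mem_Kc_lt hk, mem_Kc_ge hk, h]

lemma Kc_card {T : Fin t → ℤ} (hT : ∀ i, T i = 1 ∨ T i = -1) :
    (Kc T).card = ((Finset.range t).filter (fun k => eps T k ≠ 0)).card := by
  rw [decomp_card (Kc_subset T) (Kc_free T)]
  congr 1
  apply Finset.filter_congr
  intro k hk
  rw [epsK_Kc hT k (Finset.mem_range.mp hk)]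

lemma Kc_sum {T : Fin t → ℤ} (hT : ∀ i, T i = 1 ∨ T i = -1) (ht : 1 ≤ t) :
    ∑ k ∈ Kc T, stdCycleVertex t k = T := by
  rw [decomp_sum (Kc_subset T)]
  rw [Finset.sum_congr rfl (fun k hk => by
    rw [epsK_Kc hT k (Finset.mem_range.mp hk)])]
  exact sum_eps_eq hT ht

noncomputable def Sc (T : Fin t → ℤ) : Finset (Fin t → ℤ) := (Kc T).image (stdCycleVertex t)

lemma Sc_subset (T : Fin t → ℤ) : Sc T ⊆ stdCycleVertexSet t :=
  Finset.image_subset_image (Kc_subset T)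

lemma Sc_card {T : Fin t → ℤ} (hT : ∀ i, T i = 1 ∨ T i = -1) (ht : 1 ≤ t) :
    (Sc T).card = ((Finset.range t).filter (fun k => eps T k ≠ 0)).card := by
  rw [← Kc_card hT]
  apply Finset.card_image_of_injOn
  exact (V_injOn ht).mono (fun x hx => by
    simpa using Finset.mem_range.mp (Kc_subset T hx))

lemma Sc_sum {T : Fin t → ℤ} (hT : ∀ i, T i = 1 ∨ T i = -1) (ht : 1 ≤ t) :
    ∑ q ∈ Sc T, q = T := by
  rw [Sc, Finset.sum_image (fun a ha b hb h =>
    (V_injOn ht) (by simpa using Finset.mem_range.mp (Kc_subset T ha))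
      (by simpa using Finset.mem_range.mp (Kc_subset T hb)) h)]
  exact Kc_sum hT ht

lemma antipode_mem (ht : 1 ≤ t) {a b : ℕ} (ha : a < 2 * t) (hb : b < 2 * t)
    (h : stdCycleVertex t a = -stdCycleVertex t b) : a = b + t ∨ b = a + t := by
  by_cases hbt : b < t
  · left
    have : stdCycleVertex t a = stdCycleVertex t (b + t) := by rw [V_neg hbt, h]
    exact (V_injOn ht) (by simpa using ha) (by simp; omega) this
  · right
    have hb' : b - t < t := by omega
    have hbe : b - t + t = b := by omega
    have : stdCycleVertex t a = stdCycleVertex t (b - t) := by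
      have h2 := V_neg hb'
      rw [hbe] at h2
      rw [h, h2, neg_neg]
    have := (V_injOn ht) (by simpa using ha) (by simp; omega) this
    omega

lemma Sc_free {T : Fin t → ℤ} (ht : 1 ≤ t) :
    ∀ q ∈ Sc T, -q ∉ Sc T := by
  intro q hq hnq
  rw [Sc, Finset.mem_image] at hq hnq
  obtain ⟨a, ha, rfl⟩ := hq
  obtain ⟨b, hb, hba⟩ := hnq
  have ha2 := Finset.mem_range.mp (Kc_subset T ha)
  have hb2 := Finset.mem_range.mp (Kc_subset T hb)
  have : stdCycleVertex t b = -stdCycleVertex t a := by rw [hba]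
  rcases antipode_mem ht hb2 ha2 this with h | h
  · exact Kc_free T a (by omega) ⟨ha, h ▸ hb⟩
  · exact Kc_free T b (by omega) ⟨hb, h ▸ ha⟩

lemma min_unique {T : Fin t → ℤ} (hT : ∀ i, T i = 1 ∨ T i = -1) (ht : 1 ≤ t)
    {S : Finset (Fin t → ℤ)} (hS : S ⊆ stdCycleVertexSet t) (hsum : ∑ q ∈ S, q = T)
    (hfree : ∀ q ∈ S, -q ∉ S) : S = Sc T := by
  obtain ⟨K, hK, hKS⟩ : ∃ K ⊆ Finset.range (2 * t), K.image (stdCycleVertex t) = S := by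
    rw [stdCycleVertexSet] at hS
    exact Finset.subset_image_iff.mp hS
  have hmem : ∀ k ∈ K, k < 2 * t := fun k hk => Finset.mem_range.mp (hK hk)
  have hfreeK : ∀ k < t, ¬(k ∈ K ∧ k + t ∈ K) := by
    rintro k hk ⟨h1, h2⟩
    have hv1 : stdCycleVertex t k ∈ S := hKS ▸ Finset.mem_image_of_mem _ h1
    have hv2 : stdCycleVertex t (k + t) ∈ S := hKS ▸ Finset.mem_image_of_mem _ h2
    rw [V_neg hk] at hv2
    exact hfree _ hv1 hv2
  have hinjK : Set.InjOn (stdCycleVertex t) K := (V_injOn ht).mono (fun x hx => by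
    simpa using hmem x hx)
  have hsumK : ∑ k ∈ K, stdCycleVertex t k = T := by
    rw [← hsum, ← hKS, Finset.sum_image (fun a ha b hb h => hinjK ha hb h)]
  have heps : ∀ k < t, epsK t K k = eps T k := by
    apply eps_inj ht
    rw [← decomp_sum hK, hsumK, sum_eps_eq hT ht]
  have hKeq : K = Kc T := by
    ext k
    by_cases hk : k < t
    · rw [mem_Kc_lt hk, ← heps k hk]
      unfold epsK
      by_cases h1 : k ∈ K <;> by_cases h2 : k + t ∈ K <;>
        simp [h1, h2] <;> first
        | (exact absurd ⟨h1, h2⟩ (hfreeK k hk))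
        | skip
    · by_cases hk2 : k < 2 * t
      · have hke : k - t + t = k := by omega
        rw [← hke, mem_Kc_ge (show k - t < t by omega), ← heps (k - t) (by omega)]
        unfold epsK
        by_cases h1 : k - t ∈ K <;> by_cases h2 : k - t + t ∈ K <;>
          simp [h1, h2] <;> first
          | (exact absurd ⟨h1, h2⟩ (hfreeK (k - t) (by omega)))
          | skip
      · constructor
        · intro h; exact absurd (hmem k h) (by omega)
        · intro h
          exact absurd (Finset.mem_range.mp (Kc_subset T h)) (by omega)
  rw [← hKS, hKeq, Sc]
def TT (t : ℕ) (c : ℤ) (A : Finset ℕ) : Fin t → ℤ :=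
  fun i => c * (-1) ^ ((A ∩ Finset.Icc 1 i.val).card)

lemma cardstep (A : Finset ℕ) {k : ℕ} (hk : 1 ≤ k) :
    (A ∩ Finset.Icc 1 k).card
      = (A ∩ Finset.Icc 1 (k - 1)).card + (if k ∈ A then 1 else 0) := by
  by_cases hA : k ∈ A
  · rw [if_pos hA]
    have hins : A ∩ Finset.Icc 1 k = insert k (A ∩ Finset.Icc 1 (k - 1)) := by
      ext x
      simp only [Finset.mem_inter, Finset.mem_Icc, Finset.mem_insert]
      constructor
      · rintro ⟨hx, h1, h2⟩
        by_cases hxk : x = k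
        · exact Or.inl hxk
        · exact Or.inr ⟨hx, h1, by omega⟩
      · rintro (rfl | ⟨hx, h1, h2⟩)
        · exact ⟨hA, hk, le_rfl⟩
        · exact ⟨hx, h1, by omega⟩
    rw [hins, Finset.card_insert_of_notMem (by
      simp only [Finset.mem_inter, Finset.mem_Icc]; omega)]
  · rw [if_neg hA]
    have : A ∩ Finset.Icc 1 k = A ∩ Finset.Icc 1 (k - 1) := by
      ext x
      simp only [Finset.mem_inter, Finset.mem_Icc]
      constructor
      · rintro ⟨hx, h1, h2⟩
        refine ⟨hx, h1, ?_⟩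
        rcases Nat.lt_or_ge x k with h | h
        · omega
        · have : x = k := by omega
          subst this; exact absurd hx hA
      · rintro ⟨hx, h1, h2⟩; exact ⟨hx, h1, by omega⟩
    rw [this]; omega

lemma tau_TT {c : ℤ} {A : Finset ℕ} {k : ℕ} (hk : k < t) :
    tau (TT t c A) k = c * (-1) ^ ((A ∩ Finset.Icc 1 k).card) := by
  simp [tau, hk, TT]

lemma pm_pow (n : ℕ) : ((-1 : ℤ)) ^ n = 1 ∨ ((-1 : ℤ)) ^ n = -1 := by
  rcases Nat.even_or_odd n with h | h
  · left; exact h.neg_one_pow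
  · right; exact h.neg_one_pow

lemma TT_pm {c : ℤ} (hc : c = 1 ∨ c = -1) (A : Finset ℕ) (i : Fin t) :
    TT t c A i = 1 ∨ TT t c A i = -1 := by
  unfold TT
  rcases hc with rfl | rfl <;> rcases pm_pow ((A ∩ Finset.Icc 1 i.val).card) with h | h <;>
    rw [h] <;> norm_num

lemma tau_TT_zero (ht : 1 ≤ t) {c : ℤ} {A : Finset ℕ} : tau (TT t c A) 0 = c := by
  rw [tau_TT (show 0 < t by omega)]
  simp

lemma tau_TT_step (ht : 1 ≤ t) {c : ℤ} (hc : c ≠ 0) {A : Finset ℕ} {k : ℕ}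
    (h1 : 1 ≤ k) (hk : k < t) :
    (tau (TT t c A) k = tau (TT t c A) (k - 1)) ↔ k ∉ A := by
  rw [tau_TT hk, tau_TT (show k - 1 < t by omega), cardstep A h1]
  by_cases hA : k ∈ A
  · rw [if_pos hA, pow_succ]
    simp only [hA, not_true, iff_false]
    intro h
    have := mul_left_cancel₀ hc h
    rcases pm_pow ((A ∩ Finset.Icc 1 (k - 1)).card) with hp | hp <;> rw [hp] at this <;> omega
  · rw [if_neg hA]
    simp [hA]

lemma inter_Icc_eq_erase (ht : 1 ≤ t) {A : Finset ℕ} (hA : A ⊆ Finset.range t) :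
    A ∩ Finset.Icc 1 (t - 1) = A.erase 0 := by
  ext x
  simp only [Finset.mem_inter, Finset.mem_Icc, Finset.mem_erase]
  constructor
  · rintro ⟨hx, hx1, hx2⟩; exact ⟨by omega, hx⟩
  · rintro ⟨hx0, hx⟩
    have := Finset.mem_range.mp (hA hx)
    exact ⟨hx, by omega, by omega⟩

lemma erase_even_iff {A : Finset ℕ} (hodd : Odd A.card) :
    Even ((A.erase 0).card) ↔ 0 ∈ A := by
  by_cases h0 : 0 ∈ A
  · rw [Finset.card_erase_of_mem h0]
    simp only [h0, iff_true]
    rcases hodd with ⟨m, hm⟩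
    exact ⟨m, by omega⟩
  · rw [Finset.erase_eq_of_notMem h0]
    simp only [h0, iff_false]
    exact (Nat.not_even_iff_odd.mpr hodd)

lemma eps_TT (ht : 1 ≤ t) {c : ℤ} (hc : c = 1 ∨ c = -1) {A : Finset ℕ}
    (hA : A ⊆ Finset.range t) (hodd : Odd A.card) :
    (Finset.range t).filter (fun k => eps (TT t c A) k ≠ 0) = A := by
  have hc0 : c ≠ 0 := by rcases hc with rfl | rfl <;> norm_num
  ext k
  rw [Finset.mem_filter, Finset.mem_range]
  by_cases hk : k < t
  · simp only [hk, true_and]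
    by_cases h0 : k = 0
    · subst h0
      unfold eps
      rw [if_pos rfl]
      have h1 : tau (TT t c A) 0 = c := tau_TT_zero ht
      have h2 : tau (TT t c A) (t - 1) = c * (-1) ^ ((A.erase 0).card) := by
        rw [tau_TT (show t - 1 < t by omega), inter_Icc_eq_erase ht hA]
      constructor
      · intro h
        by_contra h0A
        rw [if_neg (by
          rw [h1, h2]
          intro heq
          have h3 : c * 1 = c * (-1) ^ ((A.erase 0).card) := by rw [mul_one]; exact heq
          have h4 := mul_left_cancel₀ hc0 h3
          have heven : Even ((A.erase 0).card) := by
            rcases Nat.even_or_odd ((A.erase 0).card) with he | hodd'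
            · exact he
            · rw [hodd'.neg_one_pow] at h4; omega
          exact h0A ((erase_even_iff hodd).mp heven))] at h
        exact h rfl
      · intro h0A
        have heven := (erase_even_iff hodd).mpr h0A
        rw [if_pos (by rw [h1, h2, heven.neg_one_pow, mul_one]), h1]
        exact hc0
    · unfold eps
      rw [if_neg h0]
      have hstep := tau_TT_step (A := A) ht hc0 (show 1 ≤ k by omega) hk
      constructor
      · intro h
        by_contra hA'
        rw [if_pos (hstep.mpr hA')] at h
        exact h rfl
      · intro hkA
        rw [if_neg (fun he => (hstep.mp he) hkA)]
        rw [tau_TT hk]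
        exact mul_ne_zero hc0 (by rcases pm_pow ((A ∩ Finset.Icc 1 k).card) with h | h <;> rw [h] <;> norm_num)
  · simp only [hk, false_and, false_iff]
    intro hkA
    exact hk (Finset.mem_range.mp (hA hkA))

lemma TT_recover (ht : 1 ≤ t) {T : Fin t → ℤ} (hT : ∀ i, T i = 1 ∨ T i = -1) :
    TT t (tau T 0) ((Finset.range t).filter (fun k => eps T k ≠ 0)) = T := by
  set c := tau T 0 with hc
  set A := (Finset.range t).filter (fun k => eps T k ≠ 0) with hA
  have claim : ∀ m, m < t → tau T m = c * (-1) ^ ((A ∩ Finset.Icc 1 m).card) := by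
    intro m
    induction m with
    | zero =>
      intro _
      simp [hc]
    | succ m ih =>
      intro hm
      have hmt : m < t := by omega
      have hrec := ih hmt
      have hcs := cardstep A (show 1 ≤ m + 1 by omega)
      simp only [Nat.add_sub_cancel] at hcs
      have hmemA : (m + 1) ∈ A ↔ eps T (m + 1) ≠ 0 := by
        rw [hA, Finset.mem_filter, Finset.mem_range]
        constructor
        · exact fun h => h.2
        · exact fun h => ⟨hm, h⟩
      have hepsne : eps T (m + 1) ≠ 0 ↔ tau T (m + 1) ≠ tau T m := by
        unfold eps
        rw [if_neg (by omega)]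
        simp only [Nat.add_sub_cancel]
        constructor
        · intro h heq
          rw [if_pos heq] at h
          exact h rfl
        · intro h
          rw [if_neg h]
          rcases htau hT hm with h1 | h1 <;> rw [h1] <;> norm_num
      by_cases hmem : (m + 1) ∈ A
      · have hne := hepsne.mp (hmemA.mp hmem)
        have := pm_add (htau hT hm) (htau hT hmt) hne
        rw [hcs, if_pos hmem, pow_succ, ← mul_assoc, ← hrec]
        linarith
      · have heq : tau T (m + 1) = tau T m := by
          by_contra hne
          exact hmem (hmemA.mpr (hepsne.mpr hne))
        rw [hcs, if_neg hmem, add_zero, ← hrec, heq]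
  funext i
  rw [← tau_eq T i]
  have := claim i.val i.isLt
  rw [this]
  rfl

lemma mem_iff (ht : 1 ≤ t) (j : ℕ) (T : Fin t → ℤ) :
    ((∀ i, T i = 1 ∨ T i = -1) ∧
      ∃ S : Finset (Fin t → ℤ), S ⊆ stdCycleVertexSet t ∧ S.card = j ∧
        (∑ q ∈ S, q) = T ∧
        ∀ S' ⊆ stdCycleVertexSet t, (∑ q ∈ S', q) = T → ¬ S' ⊂ S)
    ↔ ((∀ i, T i = 1 ∨ T i = -1) ∧
        ((Finset.range t).filter (fun k => eps T k ≠ 0)).card = j) := by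
  constructor
  · rintro ⟨hT, S, hSsub, hScard, hSsum, hSmin⟩
    refine ⟨hT, ?_⟩
    have hfree : ∀ q ∈ S, -q ∉ S := by
      intro q hq hnq
      have hqpm : q ⟨0, by omega⟩ = 1 ∨ q ⟨0, by omega⟩ = -1 := by
        obtain ⟨k, _, rfl⟩ := Finset.mem_image.mp (hSsub hq)
        exact V_pm _
      have hqne : q ≠ -q := by
        intro h
        have := congrFun h ⟨0, by omega⟩
        simp only [Pi.neg_apply] at this
        omega
      set S' := (S.erase q).erase (-q) with hS'
      have hnq' : -q ∈ S.erase q := Finset.mem_erase.mpr ⟨fun h => hqne h.symm, hnq⟩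
      have hsum' : ∑ x ∈ S', x = T := by
        rw [hS', Finset.sum_erase_eq_sub hnq', Finset.sum_erase_eq_sub hq, hSsum]
        ring
      have hsub' : S' ⊆ stdCycleVertexSet t :=
        ((Finset.erase_subset _ _).trans (Finset.erase_subset _ _)).trans hSsub
      have hss : S' ⊂ S := by
        constructor
        · exact (Finset.erase_subset _ _).trans (Finset.erase_subset _ _)
        · intro h
          have hqS' := h hq
          exact Finset.notMem_erase q S (Finset.mem_erase.mp hqS').2
      exact hSmin S' hsub' hsum' hss
    have := min_unique hT ht hSsub hSsum hfree
    rw [this, Sc_card hT ht] at hScard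
    exact hScard
  · rintro ⟨hT, hw⟩
    refine ⟨hT, Sc T, Sc_subset T, by rw [Sc_card hT ht]; exact hw, Sc_sum hT ht, ?_⟩
    intro S' hS'sub hS'sum hss
    have hfree' : ∀ q ∈ S', -q ∉ S' := by
      intro q hq hnq
      exact Sc_free ht q (hss.subset hq) (hss.subset hnq)
    have := min_unique hT ht hS'sub hS'sum hfree'
    exact (ssubset_irrefl _) (this ▸ hss)

end
end Stmt11Aux

theorem stmt_11 (t : ℕ) (ht : 3 ≤ t) (j : ℕ) (hj1 : 1 ≤ j) (hj2 : j ≤ t) (hjodd : Odd j) :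
    Nat.card {T : Fin t → ℤ |
      (∀ i, T i = 1 ∨ T i = -1) ∧
      ∃ S : Finset (Fin t → ℤ), S ⊆ stdCycleVertexSet t ∧ S.card = j ∧
        (∑ q ∈ S, q) = T ∧
        ∀ S' ⊆ stdCycleVertexSet t, (∑ q ∈ S', q) = T → ¬ S' ⊂ S}
      = 2 * Nat.choose t j := by
  classical
  have ht1 : 1 ≤ t := by omega
  set pairs := (({1, -1} : Finset ℤ) ×ˢ (Finset.range t).powersetCard j) with hpairs
  set F := pairs.image (fun p => Stmt11Aux.TT t p.1 p.2) with hF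
  have hmempairs : ∀ p : ℤ × Finset ℕ, p ∈ pairs ↔
      (p.1 = 1 ∨ p.1 = -1) ∧ p.2 ⊆ Finset.range t ∧ p.2.card = j := by
    intro p
    rw [hpairs, Finset.mem_product, Finset.mem_insert, Finset.mem_singleton,
      Finset.mem_powersetCard]
    try tauto
  have hset : {T : Fin t → ℤ |
      (∀ i, T i = 1 ∨ T i = -1) ∧
      ∃ S : Finset (Fin t → ℤ), S ⊆ stdCycleVertexSet t ∧ S.card = j ∧
        (∑ q ∈ S, q) = T ∧
        ∀ S' ⊆ stdCycleVertexSet t, (∑ q ∈ S', q) = T → ¬ S' ⊂ S} = ↑F := by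
    ext T
    rw [Set.mem_setOf_eq, Stmt11Aux.mem_iff ht1 j T, Finset.mem_coe, hF, Finset.mem_image]
    constructor
    · rintro ⟨hT, hw⟩
      refine ⟨⟨Stmt11Aux.tau T 0, (Finset.range t).filter (fun k => Stmt11Aux.eps T k ≠ 0)⟩,
        ?_, ?_⟩
      · rw [hmempairs]
        exact ⟨Stmt11Aux.htau hT (by omega), Finset.filter_subset _ _, hw⟩
      · exact Stmt11Aux.TT_recover ht1 hT
    · rintro ⟨⟨c, A⟩, hp, rfl⟩
      rw [hmempairs] at hp
      obtain ⟨hc, hA, hcard⟩ := hp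
      have hodd : Odd A.card := hcard ▸ hjodd
      refine ⟨fun i => Stmt11Aux.TT_pm hc A i, ?_⟩
      have := Stmt11Aux.eps_TT ht1 hc hA hodd
      rw [this, hcard]
  rw [hset, Nat.card_coe_set_eq, Set.ncard_coe_finset]
  have hinj : Set.InjOn (fun p : ℤ × Finset ℕ => Stmt11Aux.TT t p.1 p.2) ↑pairs := by
    rintro ⟨c, A⟩ hp ⟨c', A'⟩ hp' h
    rw [Finset.mem_coe, hmempairs] at hp hp'
    simp only at h
    have hcc : c = c' := by
      have h1 := Stmt11Aux.tau_TT_zero (t := t) ht1 (c := c) (A := A)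
      have h2 := Stmt11Aux.tau_TT_zero (t := t) ht1 (c := c') (A := A')
      rw [h] at h1
      exact h1.symm.trans h2
    subst hcc
    have hAA : A = A' := by
      have e1 := Stmt11Aux.eps_TT ht1 hp.1 hp.2.1 (hp.2.2 ▸ hjodd)
      have e2 := Stmt11Aux.eps_TT ht1 hp'.1 hp'.2.1 (hp'.2.2 ▸ hjodd)
      dsimp only at e1 e2
      rw [← e1, ← e2, h]
    rw [hAA]
  rw [Finset.card_image_of_injOn hinj, hpairs, Finset.card_product,
    Finset.card_powersetCard, Finset.card_range]
  norm_num
end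

section
/- Let t ≥ 3 and let R be the standard symmetric 2t-cycle in the hypercube graph H(t,2), with vertex set V(R) = {R^0, R^1, …, R^{2t−1}} where R^0 = (1,…,1), R^k is obtained from R^{k−1} by flipping the sign of coordinate k for 1 ≤ k ≤ t, and R^{t+k} = −R^k. Then for every T ∈ {1,−1}^t there exists a unique inclusion-minimal subset Q ⊆ V(R) with ∑_{Q'∈Q} Q' = T (coordinatewise integer sum equals T), and |Q| is odd. -/
section Aux
variable {t : ℕ}

lemma sCV_le (k : ℕ) (hk : k ≤ t) (i : Fin t) :
    stdCycleVertex t k i = if i.val < k then -1 else 1 := by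
  simp [stdCycleVertex, hk]

lemma sCV_neg' (k : ℕ) (hk : k < t) :
    stdCycleVertex t (t + k) = - stdCycleVertex t k := by
  funext i
  have hi := i.isLt
  simp only [stdCycleVertex, Pi.neg_apply]
  split_ifs <;> omega

lemma B_inj {j k : ℕ} (hj : j < t) (hk : k < t)
    (h : stdCycleVertex t j = stdCycleVertex t k) : j = k := by
  rcases lt_trichotomy j k with hlt | he | hgt
  · have := congrFun h ⟨j, hj⟩
    rw [sCV_le j (le_of_lt hj), sCV_le k (le_of_lt hk)] at this
    simp only [Fin.val_mk] at this
    split_ifs at this <;> omega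
  · exact he
  · have := congrFun h ⟨k, hk⟩
    rw [sCV_le j (le_of_lt hj), sCV_le k (le_of_lt hk)] at this
    simp only [Fin.val_mk] at this
    split_ifs at this <;> omega

lemma B_ne_negB {j k : ℕ} (hj : j < t) (hk : k < t) :
    stdCycleVertex t j ≠ - stdCycleVertex t k := by
  intro h
  have h0 : 0 < t := by omega
  have := congrFun h ⟨t - 1, by omega⟩
  rw [Pi.neg_apply, sCV_le j (le_of_lt hj), sCV_le k (le_of_lt hk)] at this
  simp only [Fin.val_mk] at this
  split_ifs at this <;> omega

lemma V_injOn {j k : ℕ} (hj : j < 2 * t) (hk : k < 2 * t)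
    (h : stdCycleVertex t j = stdCycleVertex t k) : j = k := by
  rcases Nat.lt_or_ge j t with hj' | hj' <;> rcases Nat.lt_or_ge k t with hk' | hk'
  · exact B_inj hj' hk' h
  · obtain ⟨k', rfl⟩ : ∃ k', k = t + k' := ⟨k - t, by omega⟩
    rw [sCV_neg' k' (by omega)] at h
    exact absurd h (B_ne_negB hj' (by omega))
  · obtain ⟨j', rfl⟩ : ∃ j', j = t + j' := ⟨j - t, by omega⟩
    rw [sCV_neg' j' (by omega)] at h
    exact absurd h.symm (B_ne_negB hk' (by omega))
  · obtain ⟨j', rfl⟩ : ∃ j', j = t + j' := ⟨j - t, by omega⟩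
    obtain ⟨k', rfl⟩ : ∃ k', k = t + k' := ⟨k - t, by omega⟩
    rw [sCV_neg' j' (by omega), sCV_neg' k' (by omega)] at h
    have := B_inj (t := t) (by omega) (by omega) (neg_injective h)
    omega

lemma mem_sCVS {v : Fin t → ℤ} (ht : 0 < t) :
    v ∈ stdCycleVertexSet t ↔
      ∃ k < t, v = stdCycleVertex t k ∨ v = - stdCycleVertex t k := by
  constructor
  · intro hv
    obtain ⟨k, hk, rfl⟩ := Finset.mem_image.mp hv
    rw [Finset.mem_range] at hk
    rcases Nat.lt_or_ge k t with h' | h'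
    · exact ⟨k, h', Or.inl rfl⟩
    · obtain ⟨k', rfl⟩ : ∃ k'', k = t + k'' := ⟨k - t, by omega⟩
      exact ⟨k', by omega, Or.inr (sCV_neg' k' (by omega))⟩
  · rintro ⟨k, hk, rfl | rfl⟩
    · exact Finset.mem_image.mpr ⟨k, Finset.mem_range.mpr (by omega), rfl⟩
    · exact Finset.mem_image.mpr ⟨t + k, Finset.mem_range.mpr (by omega),
        sCV_neg' k hk⟩

lemma sCVS_val {v : Fin t → ℤ} (hv : v ∈ stdCycleVertexSet t) (i : Fin t) :
    v i = 1 ∨ v i = -1 := by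
  obtain ⟨k, hk, rfl⟩ := Finset.mem_image.mp hv
  simp only [stdCycleVertex]
  split_ifs <;> omega

end Aux

section Aux2
variable {t : ℕ}

lemma sCV_le' (k : ℕ) (hk : k ≤ t) (i : Fin t) :
    stdCycleVertex t k i = if i.val < k then -1 else 1 := by
  simp [stdCycleVertex, hk]

/-- canonical partial sums -/
def pfun (t : ℕ) (T : Fin t → ℤ) : ℕ → ℤ := fun i =>
  if h : i < t then
    (if T ⟨i, h⟩ = T ⟨t - 1, by omega⟩ then T ⟨t - 1, by omega⟩ else 0)
  else 0

/-- canonical coefficients -/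
def aseq (t : ℕ) (T : Fin t → ℤ) : ℕ → ℤ
  | 0 => pfun t T 0
  | (k+1) => pfun t T (k+1) - pfun t T k

lemma sum_aseq (T : Fin t → ℤ) (i : ℕ) :
    ∑ k ∈ Finset.range (i+1), aseq t T k = pfun t T i := by
  induction i with
  | zero => simp [aseq]
  | succ n ih => rw [Finset.sum_range_succ, ih]; simp [aseq]

lemma pfun_last (T : Fin t → ℤ) (ht : 0 < t) :
    pfun t T (t-1) = T ⟨t-1, by omega⟩ := by
  simp [pfun, Nat.sub_lt ht one_pos]

lemma pfun_key (T : Fin t → ℤ) (hT : ∀ i, T i = 1 ∨ T i = -1) (ht : 0 < t)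
    {i : ℕ} (h : i < t) :
    2 * pfun t T i - T ⟨t-1, by omega⟩ = T ⟨i, h⟩ := by
  rcases hT ⟨i, h⟩ with h1 | h1 <;> rcases hT ⟨t-1, by omega⟩ with h2 | h2 <;>
    simp [pfun, h, h1, h2]

lemma pfun_cases (T : Fin t → ℤ) {i : ℕ} (h : i < t) :
    pfun t T i = 0 ∨ pfun t T i = T ⟨t-1, by omega⟩ := by
  simp only [pfun, dif_pos h]
  split_ifs <;> simp

lemma aseq_mem (T : Fin t → ℤ) (hT : ∀ i, T i = 1 ∨ T i = -1) (ht : 0 < t)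
    {k : ℕ} (hk : k < t) :
    aseq t T k = 1 ∨ aseq t T k = 0 ∨ aseq t T k = -1 := by
  have hS := hT ⟨t-1, by omega⟩
  cases k with
  | zero =>
    rcases pfun_cases T (show 0 < t from ht) with h | h <;> rw [aseq, h] <;> omega
  | succ n =>
    rcases pfun_cases T hk with h | h <;>
      rcases pfun_cases T (show n < t by omega) with h' | h' <;>
      rw [aseq, h, h'] <;> omega

/-- coordinate formula for any coefficient combination -/
lemma coord_sum (c : ℕ → ℤ) (i : Fin t) :
    ∑ k ∈ Finset.range t, c k * stdCycleVertex t k i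
      = 2 * (∑ k ∈ Finset.range (i.val+1), c k) - ∑ k ∈ Finset.range t, c k := by
  have h1 : ∀ k ∈ Finset.range t,
      c k * stdCycleVertex t k i = c k - (if i.val < k then 2 * c k else 0) := by
    intro k hk
    rw [sCV_le' k (le_of_lt (Finset.mem_range.mp hk))]
    split_ifs <;> ring
  rw [Finset.sum_congr rfl h1, Finset.sum_sub_distrib]
  have h2 : (Finset.range t).filter (fun k => i.val < k) = Finset.Ico (i.val+1) t := by
    ext k; simp [Finset.mem_filter, Finset.mem_Ico]; omega
  have h3 : ∑ k ∈ Finset.range t, (if i.val < k then 2 * c k else 0)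
      = ∑ k ∈ Finset.Ico (i.val+1) t, 2 * c k := by
    rw [← h2, Finset.sum_filter]
  have h4 : ∑ k ∈ Finset.range (i.val+1), c k + ∑ k ∈ Finset.Ico (i.val+1) t, c k
      = ∑ k ∈ Finset.range t, c k := by
    rw [Finset.range_eq_Ico, Finset.range_eq_Ico]
    exact Finset.sum_Ico_consecutive _ (by omega) (by omega)
  rw [h3]
  have h5 : ∑ k ∈ Finset.Ico (i.val+1) t, 2 * c k
      = 2 * ∑ k ∈ Finset.Ico (i.val+1) t, c k := by rw [Finset.mul_sum]
  rw [h5]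
  linarith [h4]

lemma coeff_unique (T : Fin t → ℤ) (hT : ∀ i, T i = 1 ∨ T i = -1) (ht : 0 < t)
    (c : ℕ → ℤ)
    (hc : ∀ i : Fin t, ∑ k ∈ Finset.range t, c k * stdCycleVertex t k i = T i) :
    ∀ k < t, c k = aseq t T k := by
  have htt : t - 1 + 1 = t := by omega
  have hS : ∑ k ∈ Finset.range t, c k = T ⟨t-1, by omega⟩ := by
    have := hc ⟨t-1, by omega⟩
    rw [coord_sum] at this
    simp only [Fin.val_mk, htt] at this
    linarith
  have hp : ∀ (i : ℕ) (h : i < t),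
      ∑ k ∈ Finset.range (i+1), c k = pfun t T i := by
    intro i h
    have h1 := hc ⟨i, h⟩
    rw [coord_sum, hS] at h1
    have h2 := pfun_key T hT ht h
    simp only [Fin.val_mk] at h1
    linarith
  intro k hk
  cases k with
  | zero =>
    have := hp 0 hk
    rw [Finset.sum_range_one] at this
    rw [this, aseq]
  | succ n =>
    have h1 := hp (n+1) hk
    have h2 := hp n (by omega)
    rw [Finset.sum_range_succ, h2] at h1
    rw [aseq]
    linarith

lemma aseq_sum (T : Fin t → ℤ) (hT : ∀ i, T i = 1 ∨ T i = -1) (ht : 0 < t) (i : Fin t) :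
    ∑ k ∈ Finset.range t, aseq t T k * stdCycleVertex t k i = T i := by
  have htt : t - 1 + 1 = t := by omega
  rw [coord_sum, sum_aseq]
  have h1 : ∑ k ∈ Finset.range t, aseq t T k = pfun t T (t-1) := by
    rw [show Finset.range t = Finset.range (t-1+1) by rw [htt]]
    exact sum_aseq T (t-1)
  rw [h1, pfun_last T ht]
  have := pfun_key T hT ht i.isLt
  have hi : (⟨i.val, i.isLt⟩ : Fin t) = i := rfl
  rw [hi] at this
  linarith

end Aux2

section Aux3
variable {t : ℕ}

/-- coefficients extracted from a subset -/
def qcoef (t : ℕ) (Q : Finset (Fin t → ℤ)) : ℕ → ℤ := fun k =>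
  (if stdCycleVertex t k ∈ Q then 1 else 0) - (if (-stdCycleVertex t k) ∈ Q then 1 else 0)

lemma sum_eq_coeff_sum (ht : 0 < t) (Q : Finset (Fin t → ℤ))
    (hQ : Q ⊆ stdCycleVertexSet t) (i : Fin t) :
    ∑ q ∈ Q, q i = ∑ k ∈ Finset.range t, qcoef t Q k * stdCycleVertex t k i := by
  have hQeq : Q = ((Finset.range (2*t)).filter
      (fun k => stdCycleVertex t k ∈ Q)).image (stdCycleVertex t) := by
    ext v
    constructor
    · intro hv
      obtain ⟨k, hk, rfl⟩ := Finset.mem_image.mp (hQ hv)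
      exact Finset.mem_image.mpr ⟨k, Finset.mem_filter.mpr ⟨hk, hv⟩, rfl⟩
    · intro hv
      obtain ⟨k, hk, rfl⟩ := Finset.mem_image.mp hv
      exact (Finset.mem_filter.mp hk).2
  have hinj : ∀ j ∈ (Finset.range (2*t)).filter (fun k => stdCycleVertex t k ∈ Q),
      ∀ k ∈ (Finset.range (2*t)).filter (fun k => stdCycleVertex t k ∈ Q),
      stdCycleVertex t j = stdCycleVertex t k → j = k := by
    intro j hj k hk h
    exact V_injOn (Finset.mem_range.mp (Finset.mem_filter.mp hj).1)
      (Finset.mem_range.mp (Finset.mem_filter.mp hk).1) h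
  conv_lhs => rw [hQeq]
  rw [Finset.sum_image hinj, Finset.sum_filter]
  have hsplit : Finset.range (2*t) = Finset.range t ∪ Finset.Ico t (2*t) := by
    rw [Finset.range_eq_Ico, Finset.range_eq_Ico]
    rw [Finset.Ico_union_Ico_eq_Ico (by omega) (by omega)]
  rw [hsplit, Finset.sum_union (by
    rw [Finset.range_eq_Ico]
    exact Finset.Ico_disjoint_Ico_consecutive 0 t (2*t))]
  rw [Finset.sum_Ico_eq_sum_range]
  have h2t : 2*t - t = t := by omega
  rw [h2t]
  have hterm : ∀ k ∈ Finset.range t,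
      (if stdCycleVertex t (t + k) ∈ Q then stdCycleVertex t (t + k) i else 0)
      = (if (-stdCycleVertex t k) ∈ Q then -stdCycleVertex t k i else 0) := by
    intro k hk
    rw [sCV_neg' k (Finset.mem_range.mp hk)]
    simp [Pi.neg_apply]
  rw [Finset.sum_congr rfl hterm, ← Finset.sum_add_distrib]
  refine Finset.sum_congr rfl ?_
  intro k hk
  unfold qcoef
  split_ifs <;> ring

/-- antipodal-free -/
def AF (t : ℕ) (Q : Finset (Fin t → ℤ)) : Prop :=
  ∀ k < t, ¬(stdCycleVertex t k ∈ Q ∧ (-stdCycleVertex t k) ∈ Q)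

lemma AF_mem_pos {Q : Finset (Fin t → ℤ)} (hAF : AF t Q) {k : ℕ} (hk : k < t) :
    stdCycleVertex t k ∈ Q ↔ qcoef t Q k = 1 := by
  have := hAF k hk
  unfold qcoef
  split_ifs with h1 h2 <;> simp_all

lemma AF_mem_neg {Q : Finset (Fin t → ℤ)} (hAF : AF t Q) {k : ℕ} (hk : k < t) :
    (-stdCycleVertex t k) ∈ Q ↔ qcoef t Q k = -1 := by
  have := hAF k hk
  unfold qcoef
  split_ifs with h1 h2 <;> simp_all

lemma AF_unique (ht : 0 < t) {Q Q' : Finset (Fin t → ℤ)}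
    (hQ : Q ⊆ stdCycleVertexSet t) (hQ' : Q' ⊆ stdCycleVertexSet t)
    (hAF : AF t Q) (hAF' : AF t Q')
    (hco : ∀ k < t, qcoef t Q k = qcoef t Q' k) : Q = Q' := by
  ext v
  constructor
  · intro hv
    obtain ⟨k, hk, rfl | rfl⟩ := (mem_sCVS ht).mp (hQ hv)
    · exact (AF_mem_pos hAF' hk).mpr (hco k hk ▸ (AF_mem_pos hAF hk).mp hv)
    · exact (AF_mem_neg hAF' hk).mpr (hco k hk ▸ (AF_mem_neg hAF hk).mp hv)
  · intro hv
    obtain ⟨k, hk, rfl | rfl⟩ := (mem_sCVS ht).mp (hQ' hv)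
    · exact (AF_mem_pos hAF hk).mpr ((hco k hk).symm ▸ (AF_mem_pos hAF' hk).mp hv)
    · exact (AF_mem_neg hAF hk).mpr ((hco k hk).symm ▸ (AF_mem_neg hAF' hk).mp hv)

end Aux3

section Aux4
variable {t : ℕ}

/-- the canonical decomposition -/
def Q0 (t : ℕ) (T : Fin t → ℤ) : Finset (Fin t → ℤ) :=
  ((Finset.range t).filter (fun k => aseq t T k ≠ 0)).image
    (fun k => aseq t T k • stdCycleVertex t k)

variable {T : Fin t → ℤ} (hT : ∀ i, T i = 1 ∨ T i = -1) (ht : 0 < t)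

lemma smul_pos_eq (k : ℕ) (h : aseq t T k = 1) :
    aseq t T k • stdCycleVertex t k = stdCycleVertex t k := by
  rw [h, one_smul]

lemma smul_neg_eq (k : ℕ) (h : aseq t T k = -1) :
    aseq t T k • stdCycleVertex t k = -stdCycleVertex t k := by
  rw [h, neg_smul, one_smul]

include hT ht in
lemma q0_mem_pos {k : ℕ} (hk : k < t) :
    stdCycleVertex t k ∈ Q0 t T ↔ aseq t T k = 1 := by
  constructor
  · intro h
    obtain ⟨j, hj, hje⟩ := Finset.mem_image.mp h
    obtain ⟨hjt, hja⟩ := Finset.mem_filter.mp hj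
    rw [Finset.mem_range] at hjt
    rcases aseq_mem T hT ht hjt with ha | ha | ha
    · rw [smul_pos_eq j ha] at hje
      rwa [B_inj hjt hk hje] at ha
    · exact absurd ha hja
    · rw [smul_neg_eq j ha] at hje
      exact absurd hje.symm (B_ne_negB hk hjt)
  · intro h
    refine Finset.mem_image.mpr ⟨k, Finset.mem_filter.mpr
      ⟨Finset.mem_range.mpr hk, by omega⟩, smul_pos_eq k h⟩

include hT ht in
lemma q0_mem_neg {k : ℕ} (hk : k < t) :
    (-stdCycleVertex t k) ∈ Q0 t T ↔ aseq t T k = -1 := by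
  constructor
  · intro h
    obtain ⟨j, hj, hje⟩ := Finset.mem_image.mp h
    obtain ⟨hjt, hja⟩ := Finset.mem_filter.mp hj
    rw [Finset.mem_range] at hjt
    rcases aseq_mem T hT ht hjt with ha | ha | ha
    · rw [smul_pos_eq j ha] at hje
      exact absurd hje (B_ne_negB hjt hk)
    · exact absurd ha hja
    · rw [smul_neg_eq j ha] at hje
      rwa [B_inj hjt hk (neg_injective hje)] at ha
  · intro h
    refine Finset.mem_image.mpr ⟨k, Finset.mem_filter.mpr
      ⟨Finset.mem_range.mpr hk, by omega⟩, smul_neg_eq k h⟩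

include hT ht in
lemma q0_sub : Q0 t T ⊆ stdCycleVertexSet t := by
  intro v hv
  obtain ⟨j, hj, rfl⟩ := Finset.mem_image.mp hv
  obtain ⟨hjt, hja⟩ := Finset.mem_filter.mp hj
  rw [Finset.mem_range] at hjt
  rcases aseq_mem T hT ht hjt with ha | ha | ha
  · rw [smul_pos_eq j ha]
    exact (mem_sCVS ht).mpr ⟨j, hjt, Or.inl rfl⟩
  · exact absurd ha hja
  · rw [smul_neg_eq j ha]
    exact (mem_sCVS ht).mpr ⟨j, hjt, Or.inr rfl⟩

include hT ht in
lemma q0_AF : AF t (Q0 t T) := by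
  intro k hk ⟨h1, h2⟩
  rw [q0_mem_pos hT ht hk] at h1
  rw [q0_mem_neg hT ht hk] at h2
  omega

include hT ht in
lemma q0_coef {k : ℕ} (hk : k < t) : qcoef t (Q0 t T) k = aseq t T k := by
  unfold qcoef
  simp only [q0_mem_pos hT ht hk, q0_mem_neg hT ht hk]
  rcases aseq_mem T hT ht hk with ha | ha | ha <;> rw [ha] <;> norm_num

include hT ht in
lemma q0_sum : (∑ q ∈ Q0 t T, q) = T := by
  funext i
  rw [Finset.sum_apply i (Q0 t T) _, sum_eq_coeff_sum ht _ (q0_sub hT ht) i]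
  rw [Finset.sum_congr rfl (fun k hk =>
    by rw [q0_coef hT ht (Finset.mem_range.mp hk)])]
  exact aseq_sum T hT ht i

include hT ht in
lemma odd_card {Q : Finset (Fin t → ℤ)} (hQ : Q ⊆ stdCycleVertexSet t)
    (hsum : (∑ q ∈ Q, q) = T) : Odd Q.card := by
  set i0 : Fin t := ⟨t-1, by omega⟩ with hi0
  have h1 : ∑ q ∈ Q, q i0 = T i0 := by
    have := congrFun hsum i0
    rwa [Finset.sum_apply] at this
  have h2 : Even (∑ q ∈ Q, (q i0 - 1)) := by
    apply Finset.even_sum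
    intro q hq
    rcases sCVS_val (hQ hq) i0 with h | h <;> rw [h] <;> decide
  rw [Finset.sum_sub_distrib, Finset.sum_const, nsmul_eq_mul, mul_one, h1] at h2
  obtain ⟨m, hm⟩ := h2
  rcases hT i0 with h | h <;> rw [h] at hm <;> clear h1 hsum hQ hi0 <;>
    rw [Nat.odd_iff] <;> omega

end Aux4


theorem stmt_12 (t : ℕ) (ht : 3 ≤ t) (T : Fin t → ℤ)
    (hT : ∀ i, T i = 1 ∨ T i = -1) :
    (∃! Q : Finset (Fin t → ℤ),
      Q ⊆ stdCycleVertexSet t ∧ (∑ q ∈ Q, q) = T ∧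
        ∀ Q' ⊆ stdCycleVertexSet t, (∑ q ∈ Q', q) = T → ¬ Q' ⊂ Q) ∧
    (∀ Q : Finset (Fin t → ℤ),
      Q ⊆ stdCycleVertexSet t → (∑ q ∈ Q, q) = T →
        (∀ Q' ⊆ stdCycleVertexSet t, (∑ q ∈ Q', q) = T → ¬ Q' ⊂ Q) →
        Odd Q.card) := by
  have ht0 : 0 < t := by omega
  -- any subset of V summing to T, with no antipodal pair, equals Q0
  have hAF_eq : ∀ Q : Finset (Fin t → ℤ), Q ⊆ stdCycleVertexSet t →
      (∑ q ∈ Q, q) = T → AF t Q → Q = Q0 t T := by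
    intro Q hQ hsum hAF
    refine AF_unique ht0 hQ (q0_sub hT ht0) hAF (q0_AF hT ht0) ?_
    intro k hk
    rw [q0_coef hT ht0 hk]
    refine coeff_unique T hT ht0 (qcoef t Q) ?_ k hk
    intro i
    rw [← sum_eq_coeff_sum ht0 Q hQ i]
    have := congrFun hsum i
    rwa [Finset.sum_apply] at this
  -- any minimal subset is antipodal-free, hence equals Q0
  have hmin_eq : ∀ Q : Finset (Fin t → ℤ), Q ⊆ stdCycleVertexSet t →
      (∑ q ∈ Q, q) = T →
      (∀ Q' ⊆ stdCycleVertexSet t, (∑ q ∈ Q', q) = T → ¬ Q' ⊂ Q) →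
      Q = Q0 t T := by
    intro Q hQ hsum hmin
    refine hAF_eq Q hQ hsum ?_
    rintro k hk ⟨h1, h2⟩
    have hne : stdCycleVertex t k ≠ -stdCycleVertex t k := B_ne_negB hk hk
    set Q' := (Q.erase (stdCycleVertex t k)).erase (-stdCycleVertex t k) with hQ'
    have hsub : Q' ⊆ Q := (Finset.erase_subset _ _).trans (Finset.erase_subset _ _)
    have hmemB : stdCycleVertex t k ∉ Q' := by
      simp only [hQ', Finset.mem_erase]
      tauto
    have hss : Q' ⊂ Q := Finset.ssubset_iff_of_subset hsub |>.mpr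
      ⟨stdCycleVertex t k, h1, hmemB⟩
    have e1 : (-stdCycleVertex t k) ∈ Q.erase (stdCycleVertex t k) :=
      Finset.mem_erase.mpr ⟨hne.symm, h2⟩
    have s1 : (∑ q ∈ Q', q) + (-stdCycleVertex t k)
        = ∑ q ∈ Q.erase (stdCycleVertex t k), q := Finset.sum_erase_add _ _ e1
    have s2 : (∑ q ∈ Q.erase (stdCycleVertex t k), q) + stdCycleVertex t k
        = ∑ q ∈ Q, q := Finset.sum_erase_add _ _ h1
    have hsum' : (∑ q ∈ Q', q) = T := by
      have : (∑ q ∈ Q', q) + (-stdCycleVertex t k) + stdCycleVertex t k = T := by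
        rw [s1, s2, hsum]
      simpa using this
    exact hmin Q' (hsub.trans hQ) hsum' hss
  constructor
  · refine ⟨Q0 t T, ⟨q0_sub hT ht0, q0_sum hT ht0, ?_⟩, ?_⟩
    · intro Q' hQ'sub hQ'sum hss
      have hAF' : AF t Q' := by
        rintro k hk ⟨h1, h2⟩
        exact q0_AF hT ht0 k hk ⟨hss.subset h1, hss.subset h2⟩
      exact (ssubset_irrefl (Q0 t T)) (hAF_eq Q' hQ'sub hQ'sum hAF' ▸ hss)
    · intro Q hQ
      exact hmin_eq Q hQ.1 hQ.2.1 hQ.2.2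
  · intro Q hQ hsum _
    exact odd_card hT ht0 hQ hsum
end
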